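/- Let d ≥ 1, α ∈ (0,2), β ∈ (0,1) with α + β ∈ (1,2), and let λ > 0, K > 0. Let (u_t)_{t>0} be a family of twice continuously differentiable functions ℝ^d → ℝ such that (t,x) ↦ u_t(x) is jointly measurable, and for all t > 0: sup_x |u_t(x)| ≤ K, sup_x |Du_t(x)| ≤ K (min(t,1))^{−(1−β)/α}, and sup_x |D²u_t(x)| ≤ K (min(t,1))^{−(2−β)/α}. Then v(x) = ∫₀^∞ e^{−λt} u_t(x) dt defines a bounded continuously differentiable function with bounded gradient, and there exists a constant c > 0, depending only on d, α, β and λ, such that sup_x |Dv(x)| + [Dv]_{α+β−1} ≤ c K. -/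

import Mathlib

open MeasureTheory Real
open scoped ENNReal

noncomputable section

open Filter Topology

section AuxLemmas

lemma aux_asm (lam e : ℝ) :
    AEStronglyMeasurable (fun t : ℝ => Real.exp (-lam * t) * (min t 1) ^ e)
      ((volume : Measure ℝ).restrict (Set.Ioi 0)) := by
  apply ContinuousOn.aestronglyMeasurable _ measurableSet_Ioi
  apply ContinuousOn.mul
  · exact ((continuous_const.mul continuous_id).rexp).continuousOn
  · exact ((continuous_id.min continuous_const).continuousOn).rpow_const
      fun t ht => Or.inl (ne_of_gt (lt_min ht zero_lt_one))

lemma aux_integrable (lam e : ℝ) (hlam : 0 < lam) (he1 : -1 < e) (he2 : e ≤ 0) :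
    MeasureTheory.IntegrableOn (fun t : ℝ => Real.exp (-lam * t) * (min t 1) ^ e)
      (Set.Ioi (0:ℝ)) := by
  rw [show Set.Ioi (0:ℝ) = Set.Ioc 0 1 ∪ Set.Ioi 1 from
    (Set.Ioc_union_Ioi_eq_Ioi zero_le_one).symm]
  apply MeasureTheory.IntegrableOn.union
  · have h1 : IntegrableOn (fun t : ℝ => t ^ e) (Set.Ioc (0:ℝ) 1) := by
      have := intervalIntegral.intervalIntegrable_rpow' (a := (0:ℝ)) (b := 1) he1
      rwa [intervalIntegrable_iff_integrableOn_Ioc_of_le zero_le_one] at this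
    refine h1.mono' ((aux_asm lam e).mono_measure
      (Measure.restrict_mono Set.Ioc_subset_Ioi_self le_rfl)) ?_
    filter_upwards [ae_restrict_mem measurableSet_Ioc] with t ht
    rw [min_eq_left ht.2, Real.norm_eq_abs,
      abs_of_nonneg (mul_nonneg (Real.exp_nonneg _) (Real.rpow_nonneg ht.1.le e))]
    calc Real.exp (-lam * t) * t ^ e ≤ 1 * t ^ e := by
          apply mul_le_mul_of_nonneg_right _ (le_of_lt (Real.rpow_pos_of_pos ht.1 e))
          rw [← Real.exp_zero]
          exact Real.exp_le_exp.mpr (by nlinarith [ht.1])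
      _ = t ^ e := one_mul _
  · refine (exp_neg_integrableOn_Ioi 1 hlam).mono' ((aux_asm lam e).mono_measure
      (Measure.restrict_mono (Set.Ioi_subset_Ioi zero_le_one) le_rfl)) ?_
    filter_upwards [ae_restrict_mem measurableSet_Ioi] with t ht
    rw [min_eq_right (le_of_lt ht), Real.one_rpow, mul_one, Real.norm_eq_abs,
      abs_of_nonneg (Real.exp_nonneg _)]

lemma aux_snd_deriv_norm {X : Type*} [NormedAddCommGroup X] [NormedSpace ℝ X]
    (f : X → ℝ) (x : X) :
    ‖fderiv ℝ (fderiv ℝ f) x‖ ≤ ‖iteratedFDeriv ℝ 2 f x‖ := by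
  refine ContinuousLinearMap.opNorm_le_bound _ (norm_nonneg _) fun v => ?_
  refine ContinuousLinearMap.opNorm_le_bound _ (by positivity) fun w => ?_
  calc ‖fderiv ℝ (fderiv ℝ f) x v w‖ = ‖iteratedFDeriv ℝ 2 f x ![v, w]‖ := by
        rw [iteratedFDeriv_two_apply]
        simp
    _ ≤ ‖iteratedFDeriv ℝ 2 f x‖ * (‖v‖ * ‖w‖) := by
        have := (iteratedFDeriv ℝ 2 f x).le_opNorm ![v, w]
        simpa [Fin.prod_univ_two, mul_assoc] using this
    _ = ‖iteratedFDeriv ℝ 2 f x‖ * ‖v‖ * ‖w‖ := by ring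

lemma aux_fderiv_lip {X : Type*} [NormedAddCommGroup X] [NormedSpace ℝ X]
    {g : X → ℝ} (hg : ContDiff ℝ 2 g) {B : ℝ}
    (hB : ∀ z, ‖iteratedFDeriv ℝ 2 g z‖ ≤ B) (x y : X) :
    ‖fderiv ℝ g x - fderiv ℝ g y‖ ≤ B * ‖x - y‖ := by
  have hdiff : Differentiable ℝ (fderiv ℝ g) :=
    (hg.fderiv_right (m := 1) (by norm_num)).differentiable (by norm_num)
  exact convex_univ.norm_image_sub_le_of_norm_fderiv_le
    (fun z _ => hdiff.differentiableAt)
    (fun z _ => le_trans (aux_snd_deriv_norm g z) (hB z))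
    (Set.mem_univ y) (Set.mem_univ x)

lemma aux_fderiv_meas {d : ℕ} (u : ℝ → EuclideanSpace ℝ (Fin d) → ℝ)
    (hu : Measurable (Function.uncurry u))
    (hC2 : ∀ t : ℝ, 0 < t → ContDiff ℝ 2 (u t)) (x : EuclideanSpace ℝ (Fin d)) :
    AEStronglyMeasurable (fun t => fderiv ℝ (u t) x)
      ((volume : Measure ℝ).restrict (Set.Ioi 0)) := by
  have hcoord : ∀ v : EuclideanSpace ℝ (Fin d),
      AEMeasurable (fun t => fderiv ℝ (u t) x v) ((volume : Measure ℝ).restrict (Set.Ioi 0)) := by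
    intro v
    have hmeas : ∀ n : ℕ, Measurable
        (fun t => ((n : ℝ) + 1) * (u t (x + ((n : ℝ) + 1)⁻¹ • v) - u t x)) := by
      intro n
      exact measurable_const.mul ((hu.comp (measurable_id.prodMk measurable_const)).sub
        (hu.comp (measurable_id.prodMk measurable_const)))
    refine aemeasurable_of_tendsto_metrizable_ae atTop (fun n => (hmeas n).aemeasurable) ?_
    filter_upwards [ae_restrict_mem measurableSet_Ioi] with t ht
    have hd : HasDerivAt (fun s : ℝ => u t (x + s • v)) (fderiv ℝ (u t) x v) 0 := by
      have h1 : HasFDerivAt (u t) (fderiv ℝ (u t) x) (x + (0:ℝ) • v) := by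
        simpa using (((hC2 t ht).differentiable (by norm_num)) _).hasFDerivAt
      have h2 : HasDerivAt (fun s : ℝ => x + s • v) v 0 := by
        simpa using ((hasDerivAt_id (0:ℝ)).smul_const v).const_add x
      exact h1.comp_hasDerivAt 0 h2
    have hslope := hd.tendsto_slope_zero
    have hseq : Tendsto (fun n : ℕ => ((n : ℝ) + 1)⁻¹) atTop (𝓝[≠] (0:ℝ)) := by
      apply tendsto_nhdsWithin_of_tendsto_nhds_of_eventually_within
      · simpa [one_div] using tendsto_one_div_add_atTop_nhds_zero_nat (𝕜 := ℝ)
      · exact Eventually.of_forall fun n => by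
          simp only [Set.mem_compl_iff, Set.mem_singleton_iff]
          positivity
    have := hslope.comp hseq
    simpa [Function.comp_def, inv_inv, smul_eq_mul, zero_add] using this
  have hrepr : (fun t => fderiv ℝ (u t) x) = fun t => ∑ i : Fin d,
      (fderiv ℝ (u t) x (EuclideanSpace.single i 1)) • (EuclideanSpace.proj (𝕜 := ℝ) i) := by
    funext t
    apply ContinuousLinearMap.coe_injective
    apply Module.Basis.ext (EuclideanSpace.basisFun (Fin d) ℝ).toBasis
    intro j
    simp [EuclideanSpace.basisFun_apply, EuclideanSpace.single_apply]
  rw [hrepr]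
  apply Finset.aestronglyMeasurable_fun_sum
  intro i _
  exact ((hcoord _).aestronglyMeasurable.smul aestronglyMeasurable_const)

end AuxLemmas

/-- The `θ`-Hölder seminorm `[f]_θ` (as the least admissible Hölder constant). -/
def holderSemi {E F : Type*} [NormedAddCommGroup E] [NormedAddCommGroup F]
    (θ : ℝ) (f : E → F) : ℝ :=
  sInf {C : ℝ | 0 ≤ C ∧ ∀ x y, ‖f x - f y‖ ≤ C * ‖x - y‖ ^ θ}

set_option maxHeartbeats 1000000 in
set_option synthInstance.maxHeartbeats 400000 in
/-- if `(u_t)` satisfies `‖u_t‖_∞ ≤ K`, `‖Du_t‖_∞ ≤ K (t∧1)^{-(1-β)/α}` and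
`‖D²u_t‖_∞ ≤ K (t∧1)^{-(2-β)/α}`, then `v = ∫₀^∞ e^{-λt} u_t dt` is bounded `C¹` with
bounded gradient and `‖Dv‖_∞ + [Dv]_{α+β-1} ≤ c K` where `c = c(d,α,β,λ)`. -/
theorem laplace_transform_holder_estimate
    (d : ℕ) (hd : 1 ≤ d) (α β lam : ℝ) (hα : 0 < α ∧ α < 2) (hβ : 0 < β ∧ β < 1)
    (hαβ : 1 < α + β ∧ α + β < 2) (hlam : 0 < lam) :
    ∃ c : ℝ, 0 < c ∧
      ∀ K : ℝ, 0 < K →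
        ∀ u : ℝ → EuclideanSpace ℝ (Fin d) → ℝ,
          Measurable (Function.uncurry u) →
          (∀ t : ℝ, 0 < t → ContDiff ℝ 2 (u t)) →
          (∀ t : ℝ, 0 < t → ∀ x, |u t x| ≤ K) →
          (∀ t : ℝ, 0 < t → ∀ x, ‖fderiv ℝ (u t) x‖ ≤ K * (min t 1) ^ (-(1 - β) / α)) →
          (∀ t : ℝ, 0 < t → ∀ x,
            ‖iteratedFDeriv ℝ 2 (u t) x‖ ≤ K * (min t 1) ^ (-(2 - β) / α)) →
          (ContDiff ℝ 1 (fun x => ∫ t in Set.Ioi (0 : ℝ), Real.exp (-lam * t) * u t x) ∧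
            (∃ M, ∀ x, |∫ t in Set.Ioi (0 : ℝ), Real.exp (-lam * t) * u t x| ≤ M) ∧
            (∃ M, ∀ x, ‖fderiv ℝ
              (fun x => ∫ t in Set.Ioi (0 : ℝ), Real.exp (-lam * t) * u t x) x‖ ≤ M) ∧
            (⨆ x, ‖fderiv ℝ
                (fun x => ∫ t in Set.Ioi (0 : ℝ), Real.exp (-lam * t) * u t x) x‖) +
              holderSemi (α + β - 1) (fun x => fderiv ℝ
                (fun x => ∫ t in Set.Ioi (0 : ℝ), Real.exp (-lam * t) * u t x) x) ≤
              c * K) := by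
  obtain ⟨hα0, hα2⟩ := hα
  obtain ⟨hβ0, hβ1⟩ := hβ
  obtain ⟨hαβ1, hαβ2⟩ := hαβ
  set e₁ : ℝ := -(1 - β) / α with he₁def
  set e₂ : ℝ := -(2 - β) / α with he₂def
  set θ : ℝ := α + β - 1 with hθdef
  have he₁neg : -1 < e₁ := by
    rw [he₁def, neg_div]
    have : (1 - β) / α < 1 := (div_lt_one hα0).mpr (by linarith)
    linarith
  have he₁0 : e₁ ≤ 0 := by
    rw [he₁def, neg_div]
    have : 0 ≤ (1 - β) / α := div_nonneg (by linarith) hα0.le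
    linarith
  have he₂lt : e₂ < -1 := by
    rw [he₂def, neg_div]
    have : 1 < (2 - β) / α := (one_lt_div hα0).mpr (by linarith)
    linarith
  have hθ0 : 0 < θ := by rw [hθdef]; linarith
  have hθ1 : θ < 1 := by rw [hθdef]; linarith
  have hθe₁ : α * (e₁ + 1) = θ := by
    rw [he₁def, hθdef]; field_simp; ring
  have hθe₂ : 1 + α * (e₂ + 1) = θ := by
    rw [he₂def, hθdef]; field_simp; ring
  set m : ℝ := -(e₂ + 1) with hmdef
  have hm0 : 0 < m := by rw [hmdef]; linarith
  set A : ℝ := ∫ t in Set.Ioi (0:ℝ), Real.exp (-lam * t) * (min t 1) ^ e₁ with hAdef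
  set I₀ : ℝ := ∫ t in Set.Ioi (0:ℝ), Real.exp (-lam * t) with hI₀def
  have hA0 : 0 ≤ A := setIntegral_nonneg measurableSet_Ioi fun t ht =>
    mul_nonneg (Real.exp_nonneg _) (Real.rpow_nonneg (le_of_lt (lt_min ht zero_lt_one)) _)
  have hI₀0 : 0 ≤ I₀ := setIntegral_nonneg measurableSet_Ioi fun t _ => Real.exp_nonneg _
  set Ch : ℝ := 2 / (e₁ + 1) + 1 / m + I₀ with hChdef
  have hCh0 : 0 ≤ Ch := by
    rw [hChdef]
    have h1 : 0 ≤ 2 / (e₁ + 1) := div_nonneg (by norm_num) (by linarith)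
    have h2 : 0 ≤ 1 / m := div_nonneg (by norm_num) hm0.le
    linarith
  refine ⟨A + (Ch + 2 * A) + 1, by linarith, ?_⟩
  intro K hK u hu hC2 hb0 hb1 hb2
  have hexp_meas : Measurable fun t : ℝ => Real.exp (-lam * t) :=
    Real.measurable_exp.comp (measurable_id.const_mul (-lam))
  have hux_meas : ∀ x : EuclideanSpace ℝ (Fin d), Measurable fun t => u t x := fun x =>
    hu.comp (measurable_id.prodMk measurable_const)
  have hKexp_int : IntegrableOn (fun t => K * Real.exp (-lam * t)) (Set.Ioi (0:ℝ)) :=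
    (exp_neg_integrableOn_Ioi 0 hlam).const_mul K
  have hFbound : ∀ x, ∀ᵐ t ∂((volume : Measure ℝ).restrict (Set.Ioi 0)),
      ‖Real.exp (-lam * t) * u t x‖ ≤ K * Real.exp (-lam * t) := by
    intro x
    filter_upwards [ae_restrict_mem measurableSet_Ioi] with t ht
    rw [Real.norm_eq_abs, abs_mul, abs_of_nonneg (Real.exp_nonneg _)]
    calc Real.exp (-lam * t) * |u t x| ≤ Real.exp (-lam * t) * K :=
          mul_le_mul_of_nonneg_left (hb0 t ht x) (Real.exp_nonneg _)
      _ = K * Real.exp (-lam * t) := mul_comm _ _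
  have hFint : ∀ x, IntegrableOn (fun t => Real.exp (-lam * t) * u t x) (Set.Ioi (0:ℝ)) :=
    fun x => hKexp_int.mono' ((hexp_meas.mul (hux_meas x)).aestronglyMeasurable) (hFbound x)
  have hDasm : ∀ x, AEStronglyMeasurable (fun t => Real.exp (-lam * t) • fderiv ℝ (u t) x)
      ((volume : Measure ℝ).restrict (Set.Ioi 0)) := fun x =>
    (hexp_meas.aestronglyMeasurable).smul (aux_fderiv_meas u hu hC2 x)
  have hbound_int : IntegrableOn (fun t => K * (Real.exp (-lam * t) * (min t 1) ^ e₁))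
      (Set.Ioi (0:ℝ)) := (aux_integrable lam e₁ hlam he₁neg he₁0).const_mul K
  have hDnorm : ∀ x, ∀ᵐ t ∂((volume : Measure ℝ).restrict (Set.Ioi 0)),
      ‖Real.exp (-lam * t) • fderiv ℝ (u t) x‖
        ≤ K * (Real.exp (-lam * t) * (min t 1) ^ e₁) := by
    intro x
    filter_upwards [ae_restrict_mem measurableSet_Ioi] with t ht
    rw [norm_smul, Real.norm_eq_abs, abs_of_nonneg (Real.exp_nonneg _)]
    calc Real.exp (-lam * t) * ‖fderiv ℝ (u t) x‖
        ≤ Real.exp (-lam * t) * (K * (min t 1) ^ e₁) :=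
          mul_le_mul_of_nonneg_left (hb1 t ht x) (Real.exp_nonneg _)
      _ = K * (Real.exp (-lam * t) * (min t 1) ^ e₁) := by ring
  have hDint : ∀ x, IntegrableOn (fun t => Real.exp (-lam * t) • fderiv ℝ (u t) x)
      (Set.Ioi (0:ℝ)) := fun x => hbound_int.mono' (hDasm x) (hDnorm x)
  set w : EuclideanSpace ℝ (Fin d) → (EuclideanSpace ℝ (Fin d) →L[ℝ] ℝ) :=
    fun x => ∫ t in Set.Ioi (0:ℝ), Real.exp (-lam * t) • fderiv ℝ (u t) x with hwdef
  have hw : ∀ x₀, HasFDerivAt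
      (fun x => ∫ t in Set.Ioi (0:ℝ), Real.exp (-lam * t) * u t x) (w x₀) x₀ := by
    intro x₀
    have H := hasFDerivAt_integral_of_dominated_of_fderiv_le (𝕜 := ℝ)
      (F := fun x t => Real.exp (-lam * t) * u t x)
      (F' := fun x t => Real.exp (-lam * t) • fderiv ℝ (u t) x)
      (bound := fun t => K * (Real.exp (-lam * t) * (min t 1) ^ e₁))
      (μ := (volume : Measure ℝ).restrict (Set.Ioi 0)) (x₀ := x₀) (Metric.ball_mem_nhds x₀ one_pos)
      (Eventually.of_forall fun x => ((hexp_meas.mul (hux_meas x)).aestronglyMeasurable))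
      (hFint x₀) (hDasm x₀) ?_ hbound_int ?_
    · simp only [hwdef]
      exact H
    · filter_upwards [ae_restrict_mem measurableSet_Ioi] with t ht x hx
      rw [norm_smul (Real.exp (-lam * t)) (fderiv ℝ (u t) x), Real.norm_eq_abs,
        abs_of_nonneg (Real.exp_nonneg _)]
      calc Real.exp (-lam * t) * ‖fderiv ℝ (u t) x‖
          ≤ Real.exp (-lam * t) * (K * (min t 1) ^ e₁) :=
            mul_le_mul_of_nonneg_left (hb1 t ht x) (Real.exp_nonneg _)
        _ = K * (Real.exp (-lam * t) * (min t 1) ^ e₁) := by ring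
    · filter_upwards [ae_restrict_mem measurableSet_Ioi] with t ht x hx
      exact ((((hC2 t ht).differentiable (by norm_num)) x).hasFDerivAt).const_mul
        (Real.exp (-lam * t))
  have hfderiv : ∀ x, fderiv ℝ
      (fun x => ∫ t in Set.Ioi (0:ℝ), Real.exp (-lam * t) * u t x) x = w x :=
    fun x => (hw x).fderiv
  have hwle : ∀ x, ‖w x‖ ≤ K * A := by
    intro x
    have h1 : ‖w x‖ ≤ ∫ t in Set.Ioi (0:ℝ), K * (Real.exp (-lam * t) * (min t 1) ^ e₁) := by
      simp only [hwdef]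
      exact norm_integral_le_of_norm_le hbound_int (hDnorm x)
    calc ‖w x‖ ≤ ∫ t in Set.Ioi (0:ℝ), K * (Real.exp (-lam * t) * (min t 1) ^ e₁) := h1
      _ = K * A := by rw [integral_const_mul]
  -- the key Hölder estimate
  have hkey : ∀ x y, ‖w x - w y‖ ≤ (Ch + 2 * A) * K * ‖x - y‖ ^ θ := by
    intro x y
    by_cases hxy : x = y
    · subst hxy
      simp [sub_self, Real.zero_rpow (ne_of_gt hθ0)]
    have hh0 : 0 < ‖x - y‖ := by
      rw [norm_pos_iff, sub_ne_zero]; exact hxy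
    have hrp0 : 0 ≤ ‖x - y‖ ^ θ := Real.rpow_nonneg hh0.le θ
    by_cases hh1 : ‖x - y‖ ≤ 1
    · -- small increment
      set T : ℝ := ‖x - y‖ ^ α with hTdef
      have hT0 : 0 < T := Real.rpow_pos_of_pos hh0 α
      have hT1 : T ≤ 1 := Real.rpow_le_one hh0.le hh1 hα0.le
      set f : ℝ → (EuclideanSpace ℝ (Fin d) →L[ℝ] ℝ) :=
        fun t => Real.exp (-lam * t) • fderiv ℝ (u t) x
          - Real.exp (-lam * t) • fderiv ℝ (u t) y with hfdef
      have hfint : IntegrableOn f (Set.Ioi (0:ℝ)) := (hDint x).sub (hDint y)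
      have hf2 : ∀ t, 0 < t →
          ‖f t‖ ≤ Real.exp (-lam * t) * (K * (min t 1) ^ e₂ * ‖x - y‖) := by
        intro t ht
        have hft : f t = Real.exp (-lam * t) • (fderiv ℝ (u t) x - fderiv ℝ (u t) y) := by
          simp only [hfdef]; rw [smul_sub]
        rw [hft, norm_smul (Real.exp (-lam * t)) (fderiv ℝ (u t) x - fderiv ℝ (u t) y),
          Real.norm_eq_abs, abs_of_nonneg (Real.exp_nonneg _)]
        exact mul_le_mul_of_nonneg_left
          (aux_fderiv_lip (hC2 t ht) (fun z => hb2 t ht z) x y) (Real.exp_nonneg _)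
      have hdecomp : w x - w y = (∫ t in Set.Ioc (0:ℝ) T, f t)
          + ((∫ t in Set.Ioc T 1, f t) + (∫ t in Set.Ioi (1:ℝ), f t)) := by
        have h1 : w x - w y = ∫ t in Set.Ioi (0:ℝ), f t := by
          simp only [hwdef, hfdef]
          exact (integral_sub (hDint x) (hDint y)).symm
        have h2 : (∫ t in Set.Ioi (0:ℝ), f t)
            = (∫ t in Set.Ioc (0:ℝ) T, f t) + (∫ t in Set.Ioi T, f t) := by
          rw [← setIntegral_union (Set.Ioc_disjoint_Ioi le_rfl) measurableSet_Ioi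
            (hfint.mono_set Set.Ioc_subset_Ioi_self)
            (hfint.mono_set (Set.Ioi_subset_Ioi hT0.le)),
            Set.Ioc_union_Ioi_eq_Ioi hT0.le]
        have h3 : (∫ t in Set.Ioi T, f t)
            = (∫ t in Set.Ioc T 1, f t) + (∫ t in Set.Ioi (1:ℝ), f t) := by
          rw [← setIntegral_union (Set.Ioc_disjoint_Ioi le_rfl) measurableSet_Ioi
            (hfint.mono_set (fun t ht => lt_trans hT0 ht.1))
            (hfint.mono_set (Set.Ioi_subset_Ioi zero_le_one)),
            Set.Ioc_union_Ioi_eq_Ioi hT1]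
        rw [h1, h2, h3]
      have hexple : ∀ t : ℝ, 0 < t → Real.exp (-lam * t) ≤ 1 := by
        intro t ht
        rw [← Real.exp_zero]
        exact Real.exp_le_exp.mpr (by nlinarith)
      -- piece 1
      have hp1 : ‖∫ t in Set.Ioc (0:ℝ) T, f t‖ ≤ 2 / (e₁ + 1) * K * ‖x - y‖ ^ θ := by
        have hb : ∀ᵐ t ∂((volume : Measure ℝ).restrict (Set.Ioc (0:ℝ) T)),
            ‖f t‖ ≤ 2 * K * t ^ e₁ := by
          filter_upwards [ae_restrict_mem measurableSet_Ioc] with t ht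
          have h01 : (0:ℝ) < t := ht.1
          have hmin : min t 1 = t := min_eq_left (le_trans ht.2 hT1)
          have hx1 := hb1 t h01 x
          have hy1 := hb1 t h01 y
          rw [hmin] at hx1 hy1
          have hfeq : f t = Real.exp (-lam * t) • fderiv ℝ (u t) x
              - Real.exp (-lam * t) • fderiv ℝ (u t) y := by simp only [hfdef]
          rw [hfeq]
          calc ‖Real.exp (-lam * t) • fderiv ℝ (u t) x
                - Real.exp (-lam * t) • fderiv ℝ (u t) y‖
              ≤ ‖Real.exp (-lam * t) • fderiv ℝ (u t) x‖
                + ‖Real.exp (-lam * t) • fderiv ℝ (u t) y‖ := norm_sub_le _ _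
            _ = Real.exp (-lam * t) * ‖fderiv ℝ (u t) x‖
                + Real.exp (-lam * t) * ‖fderiv ℝ (u t) y‖ := by
                rw [norm_smul, norm_smul, Real.norm_eq_abs, abs_of_nonneg (Real.exp_nonneg _)]
            _ ≤ 1 * (K * t ^ e₁) + 1 * (K * t ^ e₁) :=
                add_le_add (mul_le_mul (hexple t h01) hx1 (norm_nonneg _) zero_le_one)
                  (mul_le_mul (hexple t h01) hy1 (norm_nonneg _) zero_le_one)
            _ = 2 * K * t ^ e₁ := by ring
        have hgint : IntegrableOn (fun t : ℝ => 2 * K * t ^ e₁) (Set.Ioc (0:ℝ) T) := by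
          have := intervalIntegral.intervalIntegrable_rpow' (a := (0:ℝ)) (b := T) he₁neg
          rw [intervalIntegrable_iff_integrableOn_Ioc_of_le hT0.le] at this
          exact this.const_mul _
        refine le_trans (norm_integral_le_of_norm_le hgint hb) ?_
        have hval : (∫ t in Set.Ioc (0:ℝ) T, 2 * K * t ^ e₁)
            = 2 * K * (T ^ (e₁ + 1) / (e₁ + 1)) := by
          rw [← intervalIntegral.integral_of_le hT0.le, intervalIntegral.integral_const_mul,
            integral_rpow (Or.inl he₁neg),
            Real.zero_rpow (ne_of_gt (by linarith : (0:ℝ) < e₁ + 1)), sub_zero]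
        rw [hval, hTdef, ← Real.rpow_mul (norm_nonneg _), hθe₁]
        exact le_of_eq (by ring)
      -- piece 2
      have hp2 : ‖∫ t in Set.Ioc T 1, f t‖ ≤ 1 / m * K * ‖x - y‖ ^ θ := by
        have hb : ∀ᵐ t ∂((volume : Measure ℝ).restrict (Set.Ioc T 1)),
            ‖f t‖ ≤ (K * ‖x - y‖) * t ^ e₂ := by
          filter_upwards [ae_restrict_mem measurableSet_Ioc] with t ht
          have h0t : 0 < t := lt_trans hT0 ht.1
          have hft := hf2 t h0t
          rw [min_eq_left ht.2] at hft
          calc ‖f t‖ ≤ Real.exp (-lam * t) * (K * t ^ e₂ * ‖x - y‖) := hft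
            _ ≤ 1 * (K * t ^ e₂ * ‖x - y‖) :=
                mul_le_mul_of_nonneg_right (hexple t h0t)
                  (mul_nonneg (mul_nonneg hK.le (Real.rpow_nonneg h0t.le _)) (norm_nonneg _))
            _ = (K * ‖x - y‖) * t ^ e₂ := by ring
        have h0m : (0:ℝ) ∉ Set.uIcc T 1 := by
          rw [Set.uIcc_of_le hT1]
          rintro ⟨h0, -⟩
          exact absurd h0 (not_le.mpr hT0)
        have hgint : IntegrableOn (fun t : ℝ => (K * ‖x - y‖) * t ^ e₂) (Set.Ioc T 1) := by
          have := intervalIntegral.intervalIntegrable_rpow (μ := volume) (a := T) (b := 1)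
            (r := e₂) (Or.inr h0m)
          rw [intervalIntegrable_iff_integrableOn_Ioc_of_le hT1] at this
          exact this.const_mul _
        refine le_trans (norm_integral_le_of_norm_le hgint hb) ?_
        have hne : e₂ + 1 ≠ 0 := ne_of_lt (by linarith)
        have hval : (∫ t in Set.Ioc T 1, (K * ‖x - y‖) * t ^ e₂)
            = (K * ‖x - y‖) * ((1 - T ^ (e₂ + 1)) / (e₂ + 1)) := by
          rw [← intervalIntegral.integral_of_le hT1, intervalIntegral.integral_const_mul,
            integral_rpow (Or.inr ⟨ne_of_lt he₂lt, h0m⟩), Real.one_rpow]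
        rw [hval]
        have hPθ : ‖x - y‖ * T ^ (e₂ + 1) = ‖x - y‖ ^ θ := by
          rw [hTdef, ← Real.rpow_mul (norm_nonneg _)]
          nth_rewrite 1 [← Real.rpow_one ‖x - y‖]
          rw [← Real.rpow_add hh0, hθe₂]
        have heq : (1 - T ^ (e₂ + 1)) / (e₂ + 1) = (T ^ (e₂ + 1) - 1) / m := by
          rw [hmdef, div_neg, ← neg_div, neg_sub]
        rw [heq]
        have hstep : (K * ‖x - y‖) * ((T ^ (e₂ + 1) - 1) / m)
            ≤ (K * ‖x - y‖) * (T ^ (e₂ + 1) / m) := by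
          apply mul_le_mul_of_nonneg_left _ (mul_nonneg hK.le (norm_nonneg _))
          gcongr
          linarith
        calc (K * ‖x - y‖) * ((T ^ (e₂ + 1) - 1) / m)
            ≤ (K * ‖x - y‖) * (T ^ (e₂ + 1) / m) := hstep
          _ = 1 / m * K * (‖x - y‖ * T ^ (e₂ + 1)) := by ring
          _ = 1 / m * K * ‖x - y‖ ^ θ := by rw [hPθ]
      -- piece 3
      have hp3 : ‖∫ t in Set.Ioi (1:ℝ), f t‖ ≤ I₀ * K * ‖x - y‖ ^ θ := by
        have hb : ∀ᵐ t ∂((volume : Measure ℝ).restrict (Set.Ioi (1:ℝ))),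
            ‖f t‖ ≤ (K * ‖x - y‖) * Real.exp (-lam * t) := by
          filter_upwards [ae_restrict_mem measurableSet_Ioi] with t ht
          have h0t : (0:ℝ) < t := lt_trans zero_lt_one ht
          have hft := hf2 t h0t
          rw [min_eq_right (le_of_lt ht), Real.one_rpow, mul_one] at hft
          calc ‖f t‖ ≤ Real.exp (-lam * t) * (K * ‖x - y‖) := hft
            _ = (K * ‖x - y‖) * Real.exp (-lam * t) := mul_comm _ _
        have hgint : IntegrableOn (fun t : ℝ => (K * ‖x - y‖) * Real.exp (-lam * t))
            (Set.Ioi (1:ℝ)) := (exp_neg_integrableOn_Ioi 1 hlam).const_mul _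
        refine le_trans (norm_integral_le_of_norm_le hgint hb) ?_
        rw [integral_const_mul]
        have hmono : (∫ t in Set.Ioi (1:ℝ), Real.exp (-lam * t)) ≤ I₀ := by
          apply setIntegral_mono_set (exp_neg_integrableOn_Ioi 0 hlam)
            (Eventually.of_forall fun t => Real.exp_nonneg _)
            ((Set.Ioi_subset_Ioi zero_le_one).eventuallyLE)
        have hh : ‖x - y‖ ≤ ‖x - y‖ ^ θ := by
          nth_rewrite 1 [← Real.rpow_one ‖x - y‖]
          exact Real.rpow_le_rpow_of_exponent_ge hh0 hh1 hθ1.le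
        calc (K * ‖x - y‖) * ∫ t in Set.Ioi (1:ℝ), Real.exp (-lam * t)
            ≤ (K * ‖x - y‖) * I₀ :=
              mul_le_mul_of_nonneg_left hmono (mul_nonneg hK.le (norm_nonneg _))
          _ ≤ (K * ‖x - y‖ ^ θ) * I₀ := by
              apply mul_le_mul_of_nonneg_right _ hI₀0
              exact mul_le_mul_of_nonneg_left hh hK.le
          _ = I₀ * K * ‖x - y‖ ^ θ := by ring
      rw [hdecomp]
      calc ‖(∫ t in Set.Ioc (0:ℝ) T, f t)
            + ((∫ t in Set.Ioc T 1, f t) + (∫ t in Set.Ioi (1:ℝ), f t))‖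
          ≤ ‖∫ t in Set.Ioc (0:ℝ) T, f t‖
            + ‖(∫ t in Set.Ioc T 1, f t) + (∫ t in Set.Ioi (1:ℝ), f t)‖ := norm_add_le _ _
        _ ≤ ‖∫ t in Set.Ioc (0:ℝ) T, f t‖
            + (‖∫ t in Set.Ioc T 1, f t‖ + ‖∫ t in Set.Ioi (1:ℝ), f t‖) :=
            add_le_add_right (norm_add_le _ _) _
        _ ≤ 2 / (e₁ + 1) * K * ‖x - y‖ ^ θ
            + (1 / m * K * ‖x - y‖ ^ θ + I₀ * K * ‖x - y‖ ^ θ) :=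
            add_le_add hp1 (add_le_add hp2 hp3)
        _ = Ch * K * ‖x - y‖ ^ θ := by rw [hChdef]; ring
        _ ≤ (Ch + 2 * A) * K * ‖x - y‖ ^ θ := by
            apply mul_le_mul_of_nonneg_right _ hrp0
            nlinarith
    · -- large increment
      push_neg at hh1
      have hrp1 : (1:ℝ) ≤ ‖x - y‖ ^ θ := Real.one_le_rpow hh1.le hθ0.le
      calc ‖w x - w y‖ ≤ ‖w x‖ + ‖w y‖ := norm_sub_le _ _
        _ ≤ K * A + K * A := add_le_add (hwle x) (hwle y)
        _ = 2 * A * K * 1 := by ring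
        _ ≤ 2 * A * K * ‖x - y‖ ^ θ := by
            apply mul_le_mul_of_nonneg_left hrp1
            positivity
        _ ≤ (Ch + 2 * A) * K * ‖x - y‖ ^ θ := by
            apply mul_le_mul_of_nonneg_right _ hrp0
            nlinarith
  refine ⟨?_, ⟨K * I₀, ?_⟩, ⟨K * A, fun x => by rw [hfderiv x]; exact hwle x⟩, ?_⟩
  · -- C¹
    rw [contDiff_one_iff_fderiv]
    refine ⟨fun x => (hw x).differentiableAt, ?_⟩
    have hfw : (fderiv ℝ fun x => ∫ t in Set.Ioi (0:ℝ), Real.exp (-lam * t) * u t x) = w :=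
      funext hfderiv
    rw [hfw]
    rw [continuous_iff_continuousAt]
    intro x₀
    rw [ContinuousAt, tendsto_iff_dist_tendsto_zero]
    have h1 : Tendsto (fun y : EuclideanSpace ℝ (Fin d) => ‖y - x₀‖) (𝓝 x₀) (𝓝 0) := by
      have hc : Continuous fun y : EuclideanSpace ℝ (Fin d) => ‖y - x₀‖ :=
        (continuous_id.sub continuous_const).norm
      simpa using hc.tendsto x₀
    have h2 : ContinuousAt (fun s : ℝ => s ^ θ) 0 :=
      Real.continuousAt_rpow_const 0 θ (Or.inr hθ0.le)
    have h3 := (h2.tendsto.comp h1).const_mul ((Ch + 2 * A) * K)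
    rw [Function.comp_def] at h3
    rw [Real.zero_rpow (ne_of_gt hθ0), mul_zero] at h3
    apply squeeze_zero (fun y => dist_nonneg) _ h3
    intro y
    rw [dist_eq_norm]
    exact hkey y x₀
  · -- boundedness
    intro x
    rw [← Real.norm_eq_abs]
    calc ‖∫ t in Set.Ioi (0:ℝ), Real.exp (-lam * t) * u t x‖
        ≤ ∫ t in Set.Ioi (0:ℝ), K * Real.exp (-lam * t) :=
          norm_integral_le_of_norm_le hKexp_int (hFbound x)
      _ = K * I₀ := by rw [integral_const_mul]
  · -- sup + Hölder seminorm
    have hsup : (⨆ x, ‖fderiv ℝ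
        (fun x => ∫ t in Set.Ioi (0:ℝ), Real.exp (-lam * t) * u t x) x‖) ≤ K * A :=
      ciSup_le fun x => by rw [hfderiv x]; exact hwle x
    have hhol : holderSemi θ (fun x => fderiv ℝ
        (fun x => ∫ t in Set.Ioi (0:ℝ), Real.exp (-lam * t) * u t x) x) ≤ (Ch + 2 * A) * K := by
      apply csInf_le ⟨0, fun C hC => hC.1⟩
      refine ⟨by positivity, fun x y => ?_⟩
      simp only [hfderiv]
      exact hkey x y
    nlinarith [hsup, hhol]
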